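/- The generalized sum set C_{s,𝒟} = { ∑_{i=1}^∞ s_i b_i : b_i ∈ 𝒟^i } is a compact, perfect, totally disconnected subset of ℝ^p. -/

import Mathlib

set_option maxHeartbeats 1000000

/-- The generalized sum set `C_{s,𝒟} = {∑ᵢ sᵢ bᵢ : bᵢ ∈ 𝒟^i}` is a compact,
perfect, totally disconnected subset of `ℝ^p`. -/
theorem stmt_3 (p N : ℕ) (hN : 2 ≤ N)
    (s : ℕ → ℝ) (hs : ∀ n, 0 < s n) (hsum : Summable s)
    (d : ℕ → Fin N → EuclideanSpace ℝ (Fin p))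
    (hzero : ∀ n, d n ⟨0, by omega⟩ = 0)
    (κ τ : ℝ) (hτ : 0 < τ)
    (hκ : ∀ (n : ℕ) (i j : Fin N), i ≠ j → ‖d n i - d n j‖ ≤ κ)
    (hτd : ∀ (n : ℕ) (i j : Fin N), i ≠ j → τ ≤ ‖d n i - d n j‖)
    (R : ℕ → ℝ) (hR : ∀ n, R n = ∑' i, s (n + 1 + i))
    (M : ℝ) (hM : M < 1) (hsep : ∀ n, κ * R n ≤ M * (τ * s n)) :
    IsCompact (Set.range fun σ : ℕ → Fin N => ∑' i, s i • d i (σ i)) ∧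
      Perfect (Set.range fun σ : ℕ → Fin N => ∑' i, s i • d i (σ i)) ∧
      IsTotallyDisconnected (Set.range fun σ : ℕ → Fin N => ∑' i, s i • d i (σ i)) := by
  set f : (ℕ → Fin N) → EuclideanSpace ℝ (Fin p) :=
    fun σ => ∑' i, s i • d i (σ i) with hf
  -- κ is positive
  have h01 : (⟨0, by omega⟩ : Fin N) ≠ ⟨1, by omega⟩ := by
    simp [Fin.ext_iff]
  have hκτ : τ ≤ κ := le_trans (hτd 0 _ _ h01) (hκ 0 _ _ h01)
  have hκ0 : 0 < κ := lt_of_lt_of_le hτ hκτ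
  -- norm bound on digits
  have hd : ∀ n (j : Fin N), ‖d n j‖ ≤ κ := by
    intro n j
    by_cases hj : j = ⟨0, by omega⟩
    · simp [hj, hzero n, le_of_lt hκ0]
    · have := hκ n j ⟨0, by omega⟩ hj
      simpa [hzero n] using this
  -- bound on terms
  have hbound : ∀ (i : ℕ) (σ : ℕ → Fin N), ‖s i • d i (σ i)‖ ≤ κ * s i := by
    intro i σ
    rw [norm_smul, Real.norm_eq_abs, abs_of_pos (hs i), mul_comm]
    exact mul_le_mul_of_nonneg_right (hd i (σ i)) (hs i).le
  have hκsum : Summable (fun i => κ * s i) := hsum.mul_left κ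
  have hsummable : ∀ σ : ℕ → Fin N, Summable (fun i => s i • d i (σ i)) :=
    fun σ => Summable.of_norm_bounded hκsum (fun i => hbound i σ)
  -- continuity of f
  have hcont : Continuous f := by
    apply continuous_tsum (fun i => ?_) hκsum (fun i σ => hbound i σ)
    exact ((continuous_of_discreteTopology (f := d i)).comp
      (continuous_apply i)).const_smul (s i)
  -- key lower bound
  have hlow : ∀ (σ σ' : ℕ → Fin N) (n : ℕ), (∀ i < n, σ i = σ' i) → σ n ≠ σ' n →
      (1 - M) * (τ * s n) ≤ ‖f σ - f σ'‖ := by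
    intro σ σ' n hlt hne
    set h : ℕ → EuclideanSpace ℝ (Fin p) :=
      fun i => s i • (d i (σ i) - d i (σ' i)) with hh
    have hhb : ∀ i, ‖h i‖ ≤ κ * s i := by
      intro i
      by_cases hi : σ i = σ' i
      · simp only [hh, hi, sub_self, smul_zero, norm_zero]
        exact mul_nonneg hκ0.le (hs i).le
      · rw [hh, norm_smul, Real.norm_eq_abs, abs_of_pos (hs i), mul_comm]
        exact mul_le_mul_of_nonneg_right (hκ i _ _ hi) (hs i).le
    have hhsum : Summable h := Summable.of_norm_bounded hκsum hhb
    have hfd : f σ - f σ' = ∑' i, h i := by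
      rw [hf]
      rw [← Summable.tsum_sub (hsummable σ) (hsummable σ')]
      exact tsum_congr fun i => (smul_sub _ _ _).symm
    have hsplit := Summable.sum_add_tsum_nat_add (n + 1) hhsum
    have hsum_range : ∑ i ∈ Finset.range (n + 1), h i = h n := by
      rw [Finset.sum_range_succ]
      have : ∑ i ∈ Finset.range n, h i = 0 :=
        Finset.sum_eq_zero fun i hi => by
          simp [hh, hlt i (Finset.mem_range.mp hi)]
      simp [this]
    set T : EuclideanSpace ℝ (Fin p) := ∑' i, h (i + (n + 1)) with hT
    have key : f σ - f σ' = h n + T := by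
      rw [hfd, ← hsplit, hsum_range]
    have hκtail : Summable (fun i => κ * s (i + (n + 1))) :=
      (summable_nat_add_iff (n + 1)).mpr hκsum
    have hnormtail : Summable (fun i => ‖h (i + (n + 1))‖) :=
      Summable.of_nonneg_of_le (fun i => norm_nonneg _) (fun i => hhb _) hκtail
    have hTb : ‖T‖ ≤ κ * R n := by
      calc ‖T‖ ≤ ∑' i, ‖h (i + (n + 1))‖ := norm_tsum_le_tsum_norm hnormtail
        _ ≤ ∑' i, κ * s (i + (n + 1)) :=
            Summable.tsum_le_tsum (fun i => hhb _) hnormtail hκtail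
        _ = κ * ∑' i, s (i + (n + 1)) := tsum_mul_left
        _ = κ * R n := by
            rw [hR n]
            congr 1
            exact tsum_congr fun i => by ring_nf
    have hhn : τ * s n ≤ ‖h n‖ := by
      rw [hh, norm_smul, Real.norm_eq_abs, abs_of_pos (hs n), mul_comm τ (s n)]
      exact mul_le_mul_of_nonneg_left (hτd n _ _ hne) (hs n).le
    have h1 : ‖h n‖ ≤ ‖h n + T‖ + ‖T‖ := by
      have := norm_add_le (h n + T) (-T)
      simpa using this
    have h2 : ‖f σ - f σ'‖ = ‖h n + T‖ := by rw [key]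
    have expand : (1 - M) * (τ * s n) = τ * s n - M * (τ * s n) := by ring
    have hsepn := hsep n
    linarith
  -- injectivity
  have hinj : Function.Injective f := by
    intro σ σ' heq
    by_contra hne
    have hne' : ∃ n, σ n ≠ σ' n := by
      by_contra h
      push_neg at h
      exact hne (funext h)
    set n := Nat.find hne' with hn
    have h1 : σ n ≠ σ' n := Nat.find_spec hne'
    have h2 : ∀ i < n, σ i = σ' i := fun i hi => not_not.mp (Nat.find_min hne' hi)
    have := hlow σ σ' n h2 h1
    rw [heq, sub_self, norm_zero] at this
    have pos : 0 < (1 - M) * (τ * s n) :=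
      mul_pos (by linarith) (mul_pos hτ (hs n))
    linarith
  have hcomp : IsCompact (Set.range f) := isCompact_range hcont
  refine ⟨hcomp, ⟨hcomp.isClosed, ?_⟩, ?_⟩
  · -- Preperfect
    rw [preperfect_iff_nhds]
    rintro x ⟨σ, rfl⟩ U hU
    obtain ⟨ε, hε, hball⟩ := Metric.mem_nhds_iff.mp hU
    have hs0 : Filter.Tendsto s Filter.atTop (nhds 0) := hsum.tendsto_atTop_zero
    have hev : ∀ᶠ k in Filter.atTop, s k < ε / κ :=
      hs0.eventually (gt_mem_nhds (by positivity))
    obtain ⟨k, hk⟩ := hev.exists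
    have hj : ∃ j : Fin N, j ≠ σ k := by
      by_cases h : σ k = ⟨0, by omega⟩
      · exact ⟨⟨1, by omega⟩, by rw [h]; simp [Fin.ext_iff]⟩
      · exact ⟨⟨0, by omega⟩, fun hj => h hj.symm⟩
    obtain ⟨j, hj⟩ := hj
    set σ' := Function.update σ k j with hσ'def
    have hσ'k : σ' k = j := by simp [hσ'def]
    have hσ'ne : σ' ≠ σ := by
      intro h
      exact hj (by rw [← hσ'k, h])
    have hdiff : f σ' - f σ = s k • (d k (σ' k) - d k (σ k)) := by
      rw [hf]
      rw [← Summable.tsum_sub (hsummable σ') (hsummable σ)]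
      rw [tsum_eq_single k (fun b hb => by
        simp [hσ'def, Function.update_of_ne hb])]
      exact (smul_sub _ _ _).symm
    refine ⟨f σ', ⟨hball ?_, ⟨σ', rfl⟩⟩, fun he => hσ'ne (hinj he)⟩
    rw [Metric.mem_ball, dist_eq_norm, hdiff, norm_smul, Real.norm_eq_abs,
      abs_of_pos (hs k)]
    have hdk : ‖d k (σ' k) - d k (σ k)‖ ≤ κ := by
      rw [hσ'k]; exact hκ k j (σ k) hj
    calc s k * ‖d k (σ' k) - d k (σ k)‖ ≤ s k * κ :=
          mul_le_mul_of_nonneg_left hdk (hs k).le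
      _ < ε := by
          rw [← lt_div_iff₀ hκ0] at *
          exact hk
  · -- totally disconnected
    have hemb : Topology.IsEmbedding f := (hcont.isClosedEmbedding hinj).isEmbedding
    exact hemb.isTotallyDisconnected_range.mpr inferInstance
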